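/- For every r ≥ 1, the set of Y-frieze patterns of width r is finite; that is, the set of functions k : {0,1,…,r,r+1} × ℤ → ℤ with k(0,m) = k(r+1,m) = 0 and k(i,m) ≥ 1 for all i ∈ {1,…,r}, m ∈ ℤ, satisfying k(i,m)·k(i,m+1) = (1 + k(i+1,m))·(1 + k(i-1,m+1)) for all i ∈ {1,…,r}, m ∈ ℤ, is finite. -/

import Mathlib

section YfriezeAux

variable (r : ℕ)

/-- Hypotheses on a ℕ-indexed version of a Y-frieze. -/
def YHyp (K : ℕ → ℤ → ℤ) : Prop :=
  (∀ m, K 0 m = 0) ∧ (∀ m, K (r+1) m = 0) ∧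
  (∀ n m, 1 ≤ n → n ≤ r → 1 ≤ K n m) ∧
  (∀ n m, 1 ≤ n → n ≤ r →
    K n m * K n (m+1) = (1 + K (n+1) m) * (1 + K (n-1) (m+1)))

lemma yhyp_nonneg {K : ℕ → ℤ → ℤ} (h : YHyp r K) :
    ∀ n m, n ≤ r + 1 → 0 ≤ K n m := by
  obtain ⟨h0, htop, hpos, _⟩ := h
  intro n m hn
  rcases Nat.eq_zero_or_pos n with h1 | h1
  · simp [h1, h0]
  rcases eq_or_lt_of_le hn with h2 | h2
  · simp [h2, htop]
  · exact le_trans one_pos.le (hpos n m h1 (by omega))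

lemma yhyp_bound_one {K : ℕ → ℤ → ℤ} (hr : 1 ≤ r) (h : YHyp r K) (m : ℤ) :
    1 + K 1 m ≤ 4 ^ r := by
  obtain ⟨h0, htop, hpos, hrel⟩ := h
  have key : (∏ n ∈ Finset.Icc 1 r, K n m) * (∏ n ∈ Finset.Icc 1 r, K n (m+1))
      = (∏ n ∈ Finset.Icc 1 r, (1 + K (n+1) m)) *
        (∏ n ∈ Finset.Icc 1 r, (1 + K (n-1) (m+1))) := by
    rw [← Finset.prod_mul_distrib, ← Finset.prod_mul_distrib]
    exact Finset.prod_congr rfl (fun n hn => by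
      simp only [Finset.mem_Icc] at hn; exact hrel n m hn.1 hn.2)
  have e1 : (∏ n ∈ Finset.Icc 1 r, (1 + K (n+1) m))
      = ∏ n ∈ Finset.Icc 2 r, (1 + K n m) := by
    have himg : Finset.Icc 2 (r+1) = Finset.image (· + 1) (Finset.Icc 1 r) := by
      rw [Finset.image_add_right_Icc]
    have h2 : (∏ n ∈ Finset.Icc 2 (r+1), (1 + K n m))
        = ∏ n ∈ Finset.Icc 1 r, (1 + K (n+1) m) := by
      rw [himg, Finset.prod_image (by intro x _ y _ hxy; simp only at hxy; omega)]
    rw [← h2, Finset.prod_Icc_succ_top (by omega : 2 ≤ r + 1), htop, add_zero, mul_one]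
  have e2 : (∏ n ∈ Finset.Icc 1 r, (1 + K (n-1) (m+1)))
      = ∏ n ∈ Finset.Icc 1 (r-1), (1 + K n (m+1)) := by
    have himg : Finset.Icc 1 r = Finset.image (· + 1) (Finset.Icc 0 (r-1)) := by
      rw [Finset.image_add_right_Icc]
      congr 1 <;> omega
    rw [himg, Finset.prod_image (by intro x _ y _ hxy; simp only at hxy; omega)]
    have : (∏ n ∈ Finset.Icc 0 (r-1), (1 + K (n + 1 - 1) (m+1)))
        = ∏ n ∈ Finset.Icc 0 (r-1), (1 + K n (m+1)) := by
      exact Finset.prod_congr rfl (fun n _ => by norm_num)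
    rw [this]
    have hins : Finset.Icc 0 (r-1) = insert 0 (Finset.Icc 1 (r-1)) := by
      ext x; simp [Finset.mem_Icc, Finset.mem_insert]; omega
    rw [hins, Finset.prod_insert (by simp), h0, add_zero, one_mul]
  rw [e1, e2] at key
  -- split off ends of the full products
  have Rm : (∏ n ∈ Finset.Icc 1 r, (1 + K n m))
      = (1 + K 1 m) * ∏ n ∈ Finset.Icc 2 r, (1 + K n m) := by
    have hins : Finset.Icc 1 r = insert 1 (Finset.Icc 2 r) := by
      ext x; simp [Finset.mem_Icc, Finset.mem_insert]; omega
    rw [hins, Finset.prod_insert (by simp)]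
  have Rm1 : (∏ n ∈ Finset.Icc 1 r, (1 + K n (m+1)))
      = (∏ n ∈ Finset.Icc 1 (r-1), (1 + K n (m+1))) * (1 + K r (m+1)) := by
    have : r = (r - 1) + 1 := by omega
    rw [this, Finset.prod_Icc_succ_top (by omega : 1 ≤ r - 1 + 1)]
    simp
  -- products of entries are ≥ 1
  have hQ1 : (1:ℤ) ≤ ∏ n ∈ Finset.Icc 1 r, K n m := by
    have : (∏ n ∈ Finset.Icc 1 r, (1:ℤ)) ≤ ∏ n ∈ Finset.Icc 1 r, K n m :=
      Finset.prod_le_prod (by simp) (fun n hn => by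
        simp only [Finset.mem_Icc] at hn; exact hpos n m hn.1 hn.2)
    simpa using this
  have hQ2 : (1:ℤ) ≤ ∏ n ∈ Finset.Icc 1 r, K n (m+1) := by
    have : (∏ n ∈ Finset.Icc 1 r, (1:ℤ)) ≤ ∏ n ∈ Finset.Icc 1 r, K n (m+1) :=
      Finset.prod_le_prod (by simp) (fun n hn => by
        simp only [Finset.mem_Icc] at hn; exact hpos n (m+1) hn.1 hn.2)
    simpa using this
  -- Rm bound
  have hRb : ∀ m' : ℤ, (∏ n ∈ Finset.Icc 1 r, (1 + K n m'))
      ≤ 2 ^ r * ∏ n ∈ Finset.Icc 1 r, K n m' := by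
    intro m'
    have h1 : (∏ n ∈ Finset.Icc 1 r, (1 + K n m'))
        ≤ ∏ n ∈ Finset.Icc 1 r, (2 * K n m') :=
      Finset.prod_le_prod (fun n hn => by
        simp only [Finset.mem_Icc] at hn
        have := hpos n m' hn.1 hn.2; linarith)
        (fun n hn => by
        simp only [Finset.mem_Icc] at hn
        have := hpos n m' hn.1 hn.2; linarith)
    calc (∏ n ∈ Finset.Icc 1 r, (1 + K n m'))
        ≤ ∏ n ∈ Finset.Icc 1 r, (2 * K n m') := h1
      _ = 2 ^ r * ∏ n ∈ Finset.Icc 1 r, K n m' := by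
          rw [Finset.prod_mul_distrib, Finset.prod_const, Nat.card_Icc]
          norm_num
  -- combine
  have main : (1 + K 1 m) * (1 + K r (m+1)) *
      ((∏ n ∈ Finset.Icc 1 r, K n m) * (∏ n ∈ Finset.Icc 1 r, K n (m+1)))
      ≤ 4 ^ r * ((∏ n ∈ Finset.Icc 1 r, K n m) * (∏ n ∈ Finset.Icc 1 r, K n (m+1))) := by
    have lhs_eq : (1 + K 1 m) * (1 + K r (m+1)) *
        ((∏ n ∈ Finset.Icc 1 r, K n m) * (∏ n ∈ Finset.Icc 1 r, K n (m+1)))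
        = (∏ n ∈ Finset.Icc 1 r, (1 + K n m)) * (∏ n ∈ Finset.Icc 1 r, (1 + K n (m+1))) := by
      rw [Rm, Rm1, key]; ring
    rw [lhs_eq]
    have hn1 : (0:ℤ) ≤ ∏ n ∈ Finset.Icc 1 r, (1 + K n (m+1)) :=
      Finset.prod_nonneg (fun n hn => by
        simp only [Finset.mem_Icc] at hn
        have := hpos n (m+1) hn.1 hn.2; linarith)
    have hn2 : (0:ℤ) ≤ 2 ^ r * ∏ n ∈ Finset.Icc 1 r, K n m := by positivity
    calc (∏ n ∈ Finset.Icc 1 r, (1 + K n m)) * (∏ n ∈ Finset.Icc 1 r, (1 + K n (m+1)))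
        ≤ (2 ^ r * ∏ n ∈ Finset.Icc 1 r, K n m) * (2 ^ r * ∏ n ∈ Finset.Icc 1 r, K n (m+1)) :=
          mul_le_mul (hRb m) (hRb (m+1)) hn1 hn2
      _ = (2^r * 2^r) * ((∏ n ∈ Finset.Icc 1 r, K n m) * (∏ n ∈ Finset.Icc 1 r, K n (m+1))) := by
          ring
      _ = 4 ^ r * ((∏ n ∈ Finset.Icc 1 r, K n m) * (∏ n ∈ Finset.Icc 1 r, K n (m+1))) := by
          rw [← mul_pow]; norm_num
  have hQpos : (0:ℤ) < (∏ n ∈ Finset.Icc 1 r, K n m) * (∏ n ∈ Finset.Icc 1 r, K n (m+1)) := by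
    nlinarith
  have hfac : (1 + K 1 m) * (1 + K r (m+1)) ≤ 4 ^ r :=
    le_of_mul_le_mul_right main hQpos
  have h1 : (1:ℤ) ≤ K r (m+1) := hpos r (m+1) hr le_rfl
  have h2 : (1:ℤ) ≤ K 1 m := hpos 1 m le_rfl hr
  nlinarith

lemma yhyp_bound_n {K : ℕ → ℤ → ℤ} (hr : 1 ≤ r) (h : YHyp r K) :
    ∀ n, 1 ≤ n → n ≤ r → ∀ m, K n m ≤ 4 ^ (r * 2 ^ n) := by
  intro n h1n
  induction n, h1n using Nat.le_induction with
  | base =>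
    intro _ m
    have h1 := yhyp_bound_one r hr h m
    have h2 : (4:ℤ) ^ r ≤ 4 ^ (r * 2 ^ 1) := by
      apply pow_le_pow_right₀ (by norm_num)
      omega
    linarith
  | succ n hn ih =>
    intro hsr m
    obtain ⟨h0, htop, hpos, hrel⟩ := h
    have hnr : n ≤ r := by omega
    have e := hrel n m hn hnr
    have hnn : (0:ℤ) ≤ K (n-1) (m+1) := yhyp_nonneg r ⟨h0, htop, hpos, hrel⟩ (n-1) (m+1) (by omega)
    have hnn2 : (0:ℤ) ≤ K (n+1) m := yhyp_nonneg r ⟨h0, htop, hpos, hrel⟩ (n+1) m (by omega)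
    have h2 : 1 + K (n+1) m ≤ K n m * K n (m+1) := by
      rw [e]; nlinarith
    have b1 := ih hnr m
    have b2 := ih hnr (m+1)
    have hp1 : (1:ℤ) ≤ K n m := hpos n m hn hnr
    have hp2 : (1:ℤ) ≤ K n (m+1) := hpos n (m+1) hn hnr
    have hmul : K n m * K n (m+1) ≤ 4 ^ (r * 2 ^ n) * 4 ^ (r * 2 ^ n) :=
      mul_le_mul b1 b2 (by linarith) (by positivity)
    have hexp : (4:ℤ) ^ (r * 2 ^ n) * 4 ^ (r * 2 ^ n) = 4 ^ (r * 2 ^ (n+1)) := by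
      rw [← pow_add]
      congr 1
      rw [pow_succ]
      ring
    linarith [hexp ▸ hmul]

lemma yhyp_bound {K : ℕ → ℤ → ℤ} (hr : 1 ≤ r) (h : YHyp r K) :
    ∀ n m, n ≤ r + 1 → K n m ≤ 4 ^ (r * 2 ^ r) := by
  intro n m hn
  rcases Nat.eq_zero_or_pos n with h1 | h1
  · obtain ⟨h0, _, _, _⟩ := h
    simp [h1, h0]
  rcases eq_or_lt_of_le hn with h2 | h2
  · obtain ⟨_, htop, _, _⟩ := h
    simp [h2, htop]
  · have hb := yhyp_bound_n r hr h n h1 (by omega) m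
    calc K n m ≤ 4 ^ (r * 2 ^ n) := hb
      _ ≤ 4 ^ (r * 2 ^ r) := by
        apply pow_le_pow_right₀ (by norm_num)
        exact Nat.mul_le_mul_left r (Nat.pow_le_pow_right (by norm_num) (by omega))

lemma yhyp_ext {K K' : ℕ → ℤ → ℤ} (h : YHyp r K) (h' : YHyp r K')
    (hcol : ∀ n, n ≤ r + 1 → K n 0 = K' n 0) :
    ∀ (m : ℤ) n, n ≤ r + 1 → K n m = K' n m := by
  obtain ⟨h0, htop, hpos, hrel⟩ := h
  obtain ⟨h0', htop', hpos', hrel'⟩ := h'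
  have fwd : ∀ m : ℤ, (∀ n, n ≤ r + 1 → K n m = K' n m) →
      ∀ n, n ≤ r + 1 → K n (m+1) = K' n (m+1) := by
    intro m hm n
    induction n using Nat.strong_induction_on with
    | _ n ih =>
      intro hn
      rcases Nat.eq_zero_or_pos n with h1 | h1
      · simp [h1, h0, h0']
      rcases eq_or_lt_of_le hn with h2 | h2
      · simp [h2, htop, htop']
      have hn1 : 1 ≤ n := h1
      have hn2 : n ≤ r := by omega
      have e := hrel n m hn1 hn2
      have e' := hrel' n m hn1 hn2
      have k1 : K (n+1) m = K' (n+1) m := hm (n+1) (by omega)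
      have k2 : K (n-1) (m+1) = K' (n-1) (m+1) := ih (n-1) (by omega) (by omega)
      have k0 : K n m = K' n m := hm n (by omega)
      have hne : K n m ≠ 0 := by have := hpos n m hn1 hn2; omega
      apply mul_left_cancel₀ hne
      rw [e, k1, k2, k0, e']
  have bwd : ∀ m : ℤ, (∀ n, n ≤ r + 1 → K n (m+1) = K' n (m+1)) →
      ∀ n, n ≤ r + 1 → K n m = K' n m := by
    intro m hm
    suffices hQ : ∀ d, ∀ n, r + 1 - d ≤ n → n ≤ r + 1 → K n m = K' n m by
      intro n hn
      exact hQ (r+1) n (by omega) hn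
    intro d
    induction d with
    | zero =>
      intro n hn1 hn2
      have : n = r + 1 := by omega
      simp [this, htop, htop']
    | succ d ih =>
      intro n hn1 hn2
      by_cases hge : r + 1 - d ≤ n
      · exact ih n hge hn2
      push_neg at hge
      rcases Nat.eq_zero_or_pos n with h1 | h1
      · simp [h1, h0, h0']
      have hn3 : 1 ≤ n := h1
      have hn4 : n ≤ r := by omega
      have e := hrel n m hn3 hn4
      have e' := hrel' n m hn3 hn4
      have k1 : K (n+1) m = K' (n+1) m := ih (n+1) (by omega) (by omega)
      have k2 : K (n-1) (m+1) = K' (n-1) (m+1) := hm (n-1) (by omega)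
      have k3 : K n (m+1) = K' n (m+1) := hm n (by omega)
      have hne : K n (m+1) ≠ 0 := by have := hpos n (m+1) hn3 hn4; omega
      apply mul_right_cancel₀ hne
      rw [e, k1, k2, k3, ← e']
  intro m
  induction m using Int.induction_on with
  | zero => exact hcol
  | succ i ihi => exact fwd i ihi
  | pred i ihi =>
    have := bwd (-(i:ℤ) - 1)
    intro n hn2
    apply this _ n hn2
    intro n' hn'
    have : (-(i:ℤ) - 1 + 1) = -(i:ℤ) := by ring
    rw [this]
    exact ihi n' hn'

end YfriezeAux

section YfriezeMain

def toK (r : ℕ) (k : Fin (r+2) → ℤ → ℤ) : ℕ → ℤ → ℤ :=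
  fun n m => if h : n < r + 2 then k ⟨n, h⟩ m else 0

lemma fin_mk_add_one (r n : ℕ) (h : n ≤ r) (hlt : n < r+2) :
    (⟨n, hlt⟩ + 1 : Fin (r+2)) = ⟨n+1, by omega⟩ := by
  apply Fin.ext
  rw [Fin.add_def]
  simp only [Fin.val_one]
  exact Nat.mod_eq_of_lt (by omega)

lemma fin_mk_sub_one (r n : ℕ) (h1 : 1 ≤ n) (hlt : n < r+2) :
    (⟨n, hlt⟩ - 1 : Fin (r+2)) = ⟨n-1, by omega⟩ := by
  apply Fin.ext
  rw [Fin.sub_def]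
  simp only [Fin.val_one]
  show (r + 2 - 1 + n) % (r + 2) = n - 1
  have h2 : r + 2 - 1 + n = (n - 1) + (r + 2) := by omega
  rw [h2, Nat.add_mod_right]
  exact Nat.mod_eq_of_lt (by omega)

lemma toK_hyp (r : ℕ) (k : Fin (r+2) → ℤ → ℤ)
    (hk : (∀ m, k 0 m = 0) ∧ (∀ m, k (Fin.last (r+1)) m = 0) ∧
      (∀ (i : Fin (r+2)) (m : ℤ), 1 ≤ (i:ℕ) → (i:ℕ) ≤ r → 1 ≤ k i m) ∧
      (∀ (i : Fin (r+2)) (m : ℤ), 1 ≤ (i:ℕ) → (i:ℕ) ≤ r →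
        k i m * k i (m+1) = (1 + k (i+1) m) * (1 + k (i-1) (m+1)))) :
    YHyp r (toK r k) := by
  obtain ⟨h0, htop, hpos, hrel⟩ := hk
  refine ⟨?_, ?_, ?_, ?_⟩
  · intro m
    have hz : (⟨0, by omega⟩ : Fin (r+2)) = 0 := by apply Fin.ext; simp
    simp only [toK]
    rw [dif_pos (show 0 < r + 2 by omega), hz]
    exact h0 m
  · intro m
    have hl : (⟨r+1, by omega⟩ : Fin (r+2)) = Fin.last (r+1) := rfl
    simp only [toK]
    rw [dif_pos (show r + 1 < r + 2 by omega), hl]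
    exact htop m
  · intro n m h1 h2
    have hlt : n < r + 2 := by omega
    simp only [toK]
    rw [dif_pos hlt]
    exact hpos ⟨n, hlt⟩ m h1 h2
  · intro n m h1 h2
    have hlt : n < r + 2 := by omega
    have e := hrel ⟨n, hlt⟩ m h1 h2
    rw [fin_mk_add_one r n (by omega) hlt, fin_mk_sub_one r n h1 hlt] at e
    simp only [toK]
    rw [dif_pos hlt, dif_pos hlt, dif_pos (show n + 1 < r + 2 by omega),
      dif_pos (show n - 1 < r + 2 by omega)]
    exact e

lemma toK_eq (r : ℕ) (k : Fin (r+2) → ℤ → ℤ) (i : Fin (r+2)) (m : ℤ) :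
    k i m = toK r k i.val m := by
  simp only [toK]
  rw [dif_pos i.isLt]

/-- There are finitely many Y-frieze patterns of width `r`. -/
theorem Yfrieze_width_finite (r : ℕ) (hr : 1 ≤ r) :
    Set.Finite {k : Fin (r + 2) → ℤ → ℤ |
      (∀ m, k 0 m = 0) ∧ (∀ m, k (Fin.last (r + 1)) m = 0) ∧
      (∀ (i : Fin (r + 2)) (m : ℤ), 1 ≤ (i : ℕ) → (i : ℕ) ≤ r → 1 ≤ k i m) ∧
      (∀ (i : Fin (r + 2)) (m : ℤ), 1 ≤ (i : ℕ) → (i : ℕ) ≤ r →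
        k i m * k i (m + 1) = (1 + k (i + 1) m) * (1 + k (i - 1) (m + 1)))} := by
  apply Set.Finite.of_finite_image (f := fun k => fun i : Fin (r+2) => k i 0)
  · apply Set.Finite.subset
      (Set.Finite.pi (fun _ : Fin (r+2) => Set.finite_Icc (0:ℤ) (4 ^ (r * 2 ^ r))))
    rintro f ⟨k, hk, rfl⟩
    rw [Set.mem_univ_pi]
    intro i
    have hK := toK_hyp r k hk
    have hiv : i.val ≤ r + 1 := by omega
    rw [Set.mem_Icc]
    show 0 ≤ k i 0 ∧ k i 0 ≤ 4 ^ (r * 2 ^ r)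
    rw [toK_eq r k i 0]
    exact ⟨yhyp_nonneg r hK i.val 0 hiv, yhyp_bound r hr hK i.val 0 hiv⟩
  · rintro k hk k' hk' hkk'
    have hK := toK_hyp r k hk
    have hK' := toK_hyp r k' hk'
    have hcol : ∀ n, n ≤ r + 1 → toK r k n 0 = toK r k' n 0 := by
      intro n hn
      have hlt : n < r + 2 := by omega
      simp only [toK]
      rw [dif_pos hlt, dif_pos hlt]
      exact congrFun hkk' ⟨n, hlt⟩
    have hext := yhyp_ext r hK hK' hcol
    funext i m
    rw [toK_eq r k i m, toK_eq r k' i m]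
    exact hext m i.val (by omega)

end YfriezeMain
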